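/- There exists a sequence (k_i)_{i<ω} of positive integers such that the set F = { Σ_{i<ω} σ(i)/4^{k_i} : σ ∈ 4^ω }, a perfect subset W ⊆ [0,1], and a sequence (v_n)_{n<ω} ⊆ [0,1] converging to 0 satisfy: W ∪ {v_n : n < ω} is linearly independent over ℚ, and the ℚ-linear span of F intersects the ℚ-linear span of W ∪ {v_n : n < ω} only in {0}. -/

import Mathlib

open scoped Classical

namespace Stmt12

def E (p : ℕ) : ℕ := 2 * (p + 2)^2

lemma E_strictMono : StrictMono E := by
  intro a b h; unfold E
  have : a + 2 < b + 2 := by omega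
  nlinarith

lemma E_ge (p : ℕ) : p + 2 ≤ E p := by unfold E; nlinarith

lemma E_add (a i : ℕ) : E a + i ≤ E (a + i) := by
  unfold E; nlinarith [sq_nonneg (a+2), sq_nonneg i, Nat.zero_le (a*i)]

lemma E_succ (p : ℕ) : E (p + 1) = E p + (4 * p + 10) := by unfold E; ring

lemma E_mono : Monotone E := E_strictMono.monotone

noncomputable def val (d : ℕ → ℤ) : ℝ := ∑' p, (d p : ℝ) / 2 ^ E p

def Bdd (d : ℕ → ℤ) (M : ℕ) : Prop := ∀ p, |d p| ≤ (M : ℤ)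

lemma summable_bdd {d : ℕ → ℤ} {M : ℕ} (h : Bdd d M) :
    Summable (fun p => (d p : ℝ) / 2 ^ E p) := by
  apply Summable.of_norm
  have hs : Summable (fun p : ℕ => (M : ℝ) * (1/2) ^ p) :=
    summable_geometric_two.mul_left _
  apply hs.of_nonneg_of_le (fun p => norm_nonneg _)
  intro p
  have h1 : |(d p : ℝ)| ≤ (M : ℝ) := by exact_mod_cast h p
  have h2 : (2:ℝ) ^ p ≤ 2 ^ E p :=
    pow_le_pow_right₀ one_le_two (le_trans (by omega) (E_ge p))
  have h3 : (0:ℝ) < 2 ^ p := by positivity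
  have h4 : (0:ℝ) < 2 ^ E p := by positivity
  rw [Real.norm_eq_abs, abs_div, abs_of_pos h4]
  rw [div_le_iff₀ h4]
  calc |(d p : ℝ)| ≤ (M : ℝ) := h1
    _ = (M : ℝ) * (1/2)^p * 2 ^ p := by
        rw [mul_assoc, one_div, inv_pow, inv_mul_cancel₀ (ne_of_gt h3), mul_one]
    _ ≤ (M : ℝ) * (1/2)^p * 2 ^ E p := by
        apply mul_le_mul_of_nonneg_left h2 (by positivity)

/-- tail bound -/
lemma tail_bound {d : ℕ → ℤ} {M : ℕ} (h : Bdd d M) (k : ℕ) :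
    |∑' i, (d (k + i) : ℝ) / 2 ^ E (k + i)| ≤ 2 * M / 2 ^ E k := by
  have hsum : Summable (fun i => (d (k + i) : ℝ) / 2 ^ E (k + i)) := by
    have := (summable_bdd h).comp_injective (add_right_injective k)
    exact this
  have habs : Summable (fun i => |(d (k + i) : ℝ)| / 2 ^ E (k + i)) := by
    simpa [abs_div, abs_pow, abs_two] using hsum.abs
  have hgeo : Summable (fun i : ℕ => (M : ℝ) / 2 ^ E k * (1/2) ^ i) :=
    summable_geometric_two.mul_left _
  calc |∑' i, (d (k + i) : ℝ) / 2 ^ E (k + i)|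
      ≤ ∑' i, |(d (k + i) : ℝ)| / 2 ^ E (k + i) := by
        have := norm_tsum_le_tsum_norm (f := fun i => (d (k+i):ℝ)/2 ^ E (k+i))
          (by simpa [abs_div, abs_pow, abs_two] using hsum.abs)
        simpa using this
    _ ≤ ∑' i : ℕ, (M : ℝ) / 2 ^ E k * (1/2) ^ i := by
        apply Summable.tsum_le_tsum _ habs hgeo
        intro i
        have h1 : |(d (k+i) : ℝ)| ≤ (M : ℝ) := by exact_mod_cast h (k+i)
        have h2 : (2:ℝ) ^ (E k + i) ≤ 2 ^ E (k + i) :=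
          pow_le_pow_right₀ one_le_two (E_add k i)
        have h4 : (0:ℝ) < 2 ^ E (k+i) := by positivity
        rw [div_le_iff₀ h4]
        have : (M:ℝ) / 2 ^ E k * (1/2)^i * 2 ^ (E k + i) = M := by
          rw [pow_add]; field_simp; rw [mul_assoc, ← mul_pow]; norm_num
        calc |(d (k+i):ℝ)| ≤ (M:ℝ) := h1
          _ = (M:ℝ) / 2 ^ E k * (1/2)^i * 2 ^ (E k + i) := this.symm
          _ ≤ (M:ℝ) / 2 ^ E k * (1/2)^i * 2 ^ E (k+i) := by
              apply mul_le_mul_of_nonneg_left h2 (by positivity)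
    _ = (M : ℝ) / 2 ^ E k * 2 := by
        rw [tsum_mul_left, tsum_geometric_two]
    _ = 2 * M / 2 ^ E k := by ring

/-- head is an integer over 2^(E m) -/
lemma head_int (d : ℕ → ℤ) (m : ℕ) :
    ∃ z : ℤ, ∑ p ∈ Finset.range (m + 1), (d p : ℝ) / 2 ^ E p = (z : ℝ) / 2 ^ E m := by
  refine ⟨∑ p ∈ Finset.range (m + 1), d p * 2 ^ (E m - E p), ?_⟩
  push_cast
  rw [Finset.sum_div]
  apply Finset.sum_congr rfl
  intro p hp
  have hpm : p ≤ m := by simpa [Nat.lt_succ_iff] using hp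
  have hE : E p ≤ E m := E_mono hpm
  have h2 : (2:ℝ) ^ (E m - E p) * 2 ^ E p = 2 ^ E m := by
    rw [← pow_add]; congr 1; omega
  rw [div_eq_div_iff (by positivity) (by positivity), mul_assoc, h2]

/-- KEY LEMMA: digits of a bounded null expansion vanish beyond the threshold -/
lemma key {d : ℕ → ℤ} {M : ℕ} (hb : Bdd d M) (h0 : val d = 0) {P : ℕ}
    (hP : 3 * M < 2 ^ (4 * P + 6)) : ∀ p, P ≤ p → d p = 0 := by
  by_contra hcon
  push_neg at hcon
  obtain ⟨p0, hp0P, hp0⟩ := hcon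
  have hex : ∃ p, P ≤ p ∧ d p ≠ 0 := ⟨p0, hp0P, hp0⟩
  classical
  let q := Nat.find hex
  obtain ⟨hqP, hq⟩ : P ≤ q ∧ d q ≠ 0 := Nat.find_spec hex
  -- split the sum
  have hsplit : ∑ p ∈ Finset.range (q + 1), (d p : ℝ) / 2 ^ E p
      + ∑' i, (d (i + (q+1)) : ℝ) / 2 ^ E (i + (q+1)) = val d :=
    Summable.sum_add_tsum_nat_add (q+1) (summable_bdd hb)
  set T := ∑' i, (d (i + (q+1)) : ℝ) / 2 ^ E (i + (q+1)) with hTdef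
  have hTb : |T| ≤ 2 * M / 2 ^ E (q+1) := by
    have heq : T = ∑' i, (d ((q+1) + i) : ℝ) / 2 ^ E ((q+1) + i) := by
      apply tsum_congr; intro i; rw [add_comm i (q+1)]
    rw [heq]; exact tail_bound hb (q+1)
  set H := ∑ p ∈ Finset.range q, (d p : ℝ) / 2 ^ E p with hHdef
  have hsum0 : H + ((d q : ℝ) / 2 ^ E q + T) = 0 := by
    have : ∑ p ∈ Finset.range (q+1), (d p : ℝ) / 2 ^ E p
        = H + (d q : ℝ) / 2 ^ E q := Finset.sum_range_succ _ q
    rw [h0] at hsplit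
    rw [this] at hsplit
    linarith [hsplit]
  have hdq1 : (1:ℝ) ≤ |(d q : ℝ)| := by
    have : (1:ℤ) ≤ |d q| := Int.one_le_abs (by simpa using hq)
    calc (1:ℝ) = ((1:ℤ):ℝ) := by norm_num
      _ ≤ ((|d q| : ℤ) : ℝ) := by exact_mod_cast this
      _ = |(d q : ℝ)| := by push_cast; ring
  have eq1 : (0:ℝ) < 2 ^ E q := by positivity
  have eq2 : (0:ℝ) < 2 ^ E (q+1) := by positivity
  have hEq1 : E (q+1) = E q + (4*q+10) := E_succ q
  have hMd : |(d q : ℝ)| ≤ (M:ℝ) := by exact_mod_cast hb q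
  have hpow : (2:ℝ) ^ (4*P+6) ≤ 2 ^ (4*q+6) :=
    pow_le_pow_right₀ one_le_two (by omega)
  have h3M : 3 * (M:ℝ) < 2 ^ (4*P+6) := by exact_mod_cast hP
  by_cases hH : H = 0
  · have hdT : (d q : ℝ) / 2 ^ E q = -T := by
      rw [hH] at hsum0; linarith
    have h1 : (1:ℝ) / 2 ^ E q ≤ 2 * M / 2 ^ E (q+1) := by
      calc (1:ℝ)/2^E q ≤ |(d q : ℝ)| / 2 ^ E q := by gcongr
        _ = |(d q : ℝ)/2^E q| := by rw [abs_div, abs_of_pos eq1]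
        _ = |T| := by rw [hdT, abs_neg]
        _ ≤ 2*M/2^E (q+1) := hTb
    have h2 : (2:ℝ)^(4*q+10) ≤ 2*M := by
      have hcross := (div_le_div_iff₀ eq1 eq2).mp h1
      rw [hEq1, pow_add] at hcross
      have : (2:ℝ)^(4*q+10) * 2^E q ≤ 2*M * 2^E q := by ring_nf; ring_nf at hcross; linarith
      exact le_of_mul_le_mul_right this eq1
    have hlt : (2:ℝ)^(4*q+6) < 2^(4*q+10) := by
      apply pow_lt_pow_right₀ one_lt_two; omega
    have hM0 : (0:ℝ) ≤ (M:ℝ) := Nat.cast_nonneg M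
    linarith
  · obtain ⟨m, hqm⟩ : ∃ m, q = m + 1 := by
      cases hq2 : q with
      | zero => rw [hq2] at hHdef; simp at hHdef; exact absurd hHdef hH
      | succ m => exact ⟨m, rfl⟩
    obtain ⟨z, hz⟩ := head_int d m
    have hzH : H = (z:ℝ)/2^E m := by rw [hHdef, hqm]; exact hz
    have eqm : (0:ℝ) < 2^E m := by positivity
    have hzne : z ≠ 0 := by
      rintro rfl; rw [hzH] at hH; simp at hH
    have hz1 : (1:ℝ) ≤ |(z:ℝ)| := by
      have : (1:ℤ) ≤ |z| := Int.one_le_abs hzne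
      calc (1:ℝ) = ((1:ℤ):ℝ) := by norm_num
        _ ≤ ((|z| : ℤ) : ℝ) := by exact_mod_cast this
        _ = |(z : ℝ)| := by push_cast; ring
    have hHabs : (1:ℝ)/2^E m ≤ |H| := by
      rw [hzH, abs_div, abs_of_pos eqm]; gcongr
    have hH3 : |H| ≤ 3*M/2^E q := by
      have hHeq : H = -((d q : ℝ)/2^E q + T) := by linarith
      have hT2 : |T| ≤ 2*M/2^E q := by
        refine le_trans hTb ?_
        have h2le : (2:ℝ)^E q ≤ 2^E (q+1) :=
          pow_le_pow_right₀ one_le_two (E_mono (by omega))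
        gcongr <;> first | positivity | exact h2le
      calc |H| = |(d q : ℝ)/2^E q + T| := by rw [hHeq, abs_neg]
        _ ≤ |(d q : ℝ)/2^E q| + |T| := abs_add_le _ _
        _ ≤ (M:ℝ)/2^E q + 2*M/2^E q := by
            apply add_le_add _ hT2
            rw [abs_div, abs_of_pos eq1]; gcongr
        _ = 3*M/2^E q := by ring
    have h1 : (1:ℝ)/2^E m ≤ 3*M/2^E q := le_trans hHabs hH3
    have hEqm : E q = E m + (4*m+10) := by rw [hqm, E_succ]
    have h2 : (2:ℝ)^(4*m+10) ≤ 3*M := by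
      have hcross := (div_le_div_iff₀ eqm eq1).mp h1
      rw [hEqm, pow_add] at hcross
      have : (2:ℝ)^(4*m+10) * 2^E m ≤ 3*M * 2^E m := by ring_nf; ring_nf at hcross; linarith
      exact le_of_mul_le_mul_right this eqm
    have hle : (2:ℝ)^(4*P+6) ≤ 2^(4*m+10) := by
      apply pow_le_pow_right₀ one_le_two; omega
    linarith

/-! ### encoding of prefixes -/

def enc : List Bool → ℕ
  | [] => 1
  | b :: l => 2 * enc l + b.toNat

lemma length_lt_enc (l : List Bool) : l.length + 1 ≤ enc l := by
  induction l with
  | nil => simp [enc]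
  | cons b l ih => cases b <;> simp [enc, Bool.toNat] <;> omega

lemma enc_injective : Function.Injective enc := by
  intro l1
  induction l1 with
  | nil =>
    intro l2 h
    cases l2 with
    | nil => rfl
    | cons b l =>
      exfalso
      have h2 := length_lt_enc l
      cases b <;> simp [enc, Bool.toNat] at h <;> omega
  | cons b l ih =>
    intro l2 h
    cases l2 with
    | nil =>
      exfalso
      have h2 := length_lt_enc l
      cases b <;> simp [enc, Bool.toNat] at h <;> omega
    | cons b' l' =>
      have hbb : b = b' ∧ enc l = enc l' := by
        cases b <;> cases b' <;> simp [enc, Bool.toNat] at h ⊢ <;> omega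
      rw [hbb.1, ih hbb.2]

/-- the prefix of length `n` of `σ` -/
def pre (σ : ℕ → Bool) (n : ℕ) : List Bool := List.ofFn (fun i : Fin n => σ i)

lemma pre_length (σ : ℕ → Bool) (n : ℕ) : (pre σ n).length = n := by simp [pre]

lemma pre_eq {σ σ' : ℕ → Bool} {n : ℕ} (h : pre σ n = pre σ' n) {i : ℕ} (hi : i < n) :
    σ i = σ' i := by
  have := List.ofFn_inj.mp h
  exact congrFun this ⟨i, hi⟩

/-! ### digit functions -/

open scoped Classical in
noncomputable def Wdig (σ : ℕ → Bool) (p : ℕ) : ℤ :=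
  if ∃ n, p = 3 * enc (pre σ n) then 1 else 0

open scoped Classical in
noncomputable def Vdig (n : ℕ) (p : ℕ) : ℤ :=
  if ∃ m, p = 3 * Nat.pair n m + 1 then 1 else 0

noncomputable def Fdig (σ : ℕ → Fin 4) (p : ℕ) : ℤ :=
  if p % 3 = 2 then (σ (p / 3) : ℤ) else 0

lemma Wdig_bdd (σ : ℕ → Bool) : Bdd (Wdig σ) 3 := by
  intro p; unfold Wdig; split <;> simp
lemma Vdig_bdd (n : ℕ) : Bdd (Vdig n) 3 := by
  intro p; unfold Vdig; split <;> simp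
lemma Fdig_bdd (σ : ℕ → Fin 4) : Bdd (Fdig σ) 3 := by
  intro p; unfold Fdig; split
  · rw [abs_of_nonneg (by positivity)]
    exact_mod_cast Nat.le_of_lt_succ (σ (p/3)).isLt
  · simp

lemma Wdig_mod {σ : ℕ → Bool} {p : ℕ} (h : p % 3 ≠ 0) : Wdig σ p = 0 := by
  unfold Wdig; rw [if_neg]; rintro ⟨n, rfl⟩; simp at h
lemma Vdig_mod {n p : ℕ} (h : p % 3 ≠ 1) : Vdig n p = 0 := by
  unfold Vdig; rw [if_neg]; rintro ⟨m, rfl⟩; omega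
lemma Fdig_mod {σ : ℕ → Fin 4} {p : ℕ} (h : p % 3 ≠ 2) : Fdig σ p = 0 := if_neg h

/-! ### values -/

lemma val_Wdig (σ : ℕ → Bool) :
    val (Wdig σ) = ∑' n, (1:ℝ) / 2 ^ E (3 * enc (pre σ n)) := by
  have hginj : Function.Injective (fun n => 3 * enc (pre σ n)) := by
    intro a b h
    have h' : 3 * enc (pre σ a) = 3 * enc (pre σ b) := h
    have h2 : enc (pre σ a) = enc (pre σ b) := by omega
    have h3 := enc_injective h2
    rw [← pre_length σ a, h3, pre_length σ b]
  have hside : Function.support (fun p => (Wdig σ p : ℝ) / 2 ^ E p)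
      ⊆ Set.range (fun n => 3 * enc (pre σ n)) := by
    intro p hp
    simp only [Function.mem_support] at hp
    have hne : Wdig σ p ≠ 0 := fun h => hp (by rw [h]; simp)
    unfold Wdig at hne
    rw [ite_ne_right_iff] at hne
    obtain ⟨⟨n, rfl⟩, -⟩ := hne
    exact Set.mem_range.mpr ⟨n, rfl⟩
  have := Function.Injective.tsum_eq (f := fun p => (Wdig σ p : ℝ) / 2 ^ E p) hginj hside
  rw [val, ← this]
  apply tsum_congr
  intro n
  have h1 : Wdig σ (3 * enc (pre σ n)) = 1 := by
    unfold Wdig; rw [if_pos ⟨n, rfl⟩]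
  simp only [h1]; norm_num

lemma val_Vdig (n : ℕ) :
    val (Vdig n) = ∑' m, (1:ℝ) / 2 ^ E (3 * Nat.pair n m + 1) := by
  have hginj : Function.Injective (fun m => 3 * Nat.pair n m + 1) := by
    intro a b h
    have h' : 3 * Nat.pair n a + 1 = 3 * Nat.pair n b + 1 := h
    have : Nat.pair n a = Nat.pair n b := by omega
    exact (Nat.pair_eq_pair.mp this).2
  have hside : Function.support (fun p => (Vdig n p : ℝ) / 2 ^ E p)
      ⊆ Set.range (fun m => 3 * Nat.pair n m + 1) := by
    intro p hp
    simp only [Function.mem_support] at hp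
    have hne : Vdig n p ≠ 0 := fun h => hp (by rw [h]; simp)
    unfold Vdig at hne
    rw [ite_ne_right_iff] at hne
    obtain ⟨⟨m, rfl⟩, -⟩ := hne
    exact Set.mem_range.mpr ⟨m, rfl⟩
  have := Function.Injective.tsum_eq (f := fun p => (Vdig n p : ℝ) / 2 ^ E p) hginj hside
  rw [val, ← this]
  apply tsum_congr
  intro m
  have h1 : Vdig n (3 * Nat.pair n m + 1) = 1 := by
    unfold Vdig; rw [if_pos ⟨m, rfl⟩]
  simp only [h1]; norm_num

lemma val_Fdig (σ : ℕ → Fin 4) :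
    val (Fdig σ) = ∑' i, ((σ i : ℕ) : ℝ) / 2 ^ E (3 * i + 2) := by
  have hginj : Function.Injective (fun i : ℕ => 3 * i + 2) := by
    intro a b h
    have h' : 3 * a + 2 = 3 * b + 2 := h
    omega
  have hside : Function.support (fun p => (Fdig σ p : ℝ) / 2 ^ E p)
      ⊆ Set.range (fun i : ℕ => 3 * i + 2) := by
    intro p hp
    simp only [Function.mem_support] at hp
    have hne : Fdig σ p ≠ 0 := fun h => hp (by rw [h]; simp)
    have hmod : p % 3 = 2 := by
      by_contra h3; exact hne (Fdig_mod h3)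
    exact Set.mem_range.mpr ⟨p / 3, by omega⟩
  have := Function.Injective.tsum_eq (f := fun p => (Fdig σ p : ℝ) / 2 ^ E p) hginj hside
  rw [val, ← this]
  apply tsum_congr
  intro i
  have hd : (3 * i + 2) / 3 = i := by omega
  have h1 : Fdig σ (3 * i + 2) = ((σ i : ℕ) : ℤ) := by
    unfold Fdig
    rw [if_pos (by omega : (3 * i + 2) % 3 = 2), hd]
  simp only [h1]; norm_num

/-! ### summability and bounds -/

lemma summable_g {g : ℕ → ℕ} (hg : ∀ n, n ≤ E (g n)) :
    Summable (fun n => (1:ℝ) / 2 ^ E (g n)) := by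
  apply summable_geometric_two.of_nonneg_of_le (fun n => by positivity)
  intro n
  rw [div_pow, one_pow]
  apply div_le_div_of_nonneg_left one_pos.le (by positivity)
  exact pow_le_pow_right₀ one_le_two (hg n)

lemma tsum_g_le_one {g : ℕ → ℕ} (hg : ∀ n, n + 1 ≤ E (g n)) :
    ∑' n, (1:ℝ) / 2 ^ E (g n) ≤ 1 := by
  have h2 : ∑' n : ℕ, ((1:ℝ)/2) ^ (n + 1) = 1 := by
    have : ∀ n : ℕ, ((1:ℝ)/2) ^ (n+1) = ((1:ℝ)/2)^n * (1/2) := fun n => pow_succ _ _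
    rw [tsum_congr this, tsum_mul_right, tsum_geometric_two]
    norm_num
  refine le_trans ?_ h2.le
  apply Summable.tsum_le_tsum _ (summable_g (g := g) (fun n => by have := hg n; omega))
    (by
      have : ∀ n : ℕ, ((1:ℝ)/2) ^ (n+1) = ((1:ℝ)/2)^n * (1/2) := fun n => pow_succ _ _
      rw [summable_congr this]
      exact summable_geometric_two.mul_right _)
  intro n
  rw [div_pow, one_pow]
  apply div_le_div_of_nonneg_left one_pos.le (by positivity)
  exact pow_le_pow_right₀ one_le_two (hg n)

lemma hgW (σ : ℕ → Bool) (n : ℕ) : n + 1 ≤ E (3 * enc (pre σ n)) := by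
  have h1 : n + 1 ≤ enc (pre σ n) := by
    have := length_lt_enc (pre σ n); rwa [pre_length] at this
  have := E_ge (3 * enc (pre σ n))
  omega

lemma hgV (n m : ℕ) : n + m + 1 ≤ E (3 * Nat.pair n m + 1) := by
  have h1 := Nat.left_le_pair n m
  have h2 := Nat.right_le_pair n m
  have := E_ge (3 * Nat.pair n m + 1)
  omega

lemma Wdig_summable (σ : ℕ → Bool) : Summable (fun p => (Wdig σ p : ℝ) / 2 ^ E p) :=
  summable_bdd (Wdig_bdd σ)
lemma Vdig_summable (n : ℕ) : Summable (fun p => (Vdig n p : ℝ) / 2 ^ E p) :=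
  summable_bdd (Vdig_bdd n)
lemma Fdig_summable (σ : ℕ → Fin 4) : Summable (fun p => (Fdig σ p : ℝ) / 2 ^ E p) :=
  summable_bdd (Fdig_bdd σ)

lemma val_Wdig_mem (σ : ℕ → Bool) : val (Wdig σ) ∈ Set.Icc (0:ℝ) 1 := by
  rw [val_Wdig]
  constructor
  · exact tsum_nonneg (fun n => by positivity)
  · exact tsum_g_le_one (hgW σ)

lemma val_Vdig_mem (n : ℕ) : val (Vdig n) ∈ Set.Icc (0:ℝ) 1 := by
  rw [val_Vdig]
  constructor
  · exact tsum_nonneg (fun m => by positivity)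
  · exact tsum_g_le_one (fun m => by have := hgV n m; (try simp only []); omega)

lemma val_Vdig_le (n : ℕ) : val (Vdig n) ≤ 2 * (1/2:ℝ) ^ n := by
  rw [val_Vdig]
  have hsum2 : Summable (fun m : ℕ => ((1:ℝ)/2) ^ (n + m)) := by
    simp_rw [pow_add]
    exact summable_geometric_two.mul_left _
  calc ∑' m, (1:ℝ) / 2 ^ E (3 * Nat.pair n m + 1)
      ≤ ∑' m : ℕ, ((1:ℝ)/2) ^ (n + m) := by
        apply Summable.tsum_le_tsum _ (summable_g (fun m => by have := hgV n m; (try simp only []); omega)) hsum2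
        intro m
        rw [div_pow, one_pow]
        apply div_le_div_of_nonneg_left one_pos.le (by positivity)
        apply pow_le_pow_right₀ one_le_two
        have := hgV n m; omega
    _ = 2 * (1/2:ℝ) ^ n := by
        simp_rw [pow_add]
        rw [tsum_mul_left, tsum_geometric_two]
        ring

lemma val_Wdig_pos (σ : ℕ → Bool) : 0 < val (Wdig σ) := by
  rw [val_Wdig]
  have hs := summable_g (g := fun n => 3 * enc (pre σ n)) (fun n => by have := hgW σ n; (try simp only []); omega)
  calc (0:ℝ) < 1 / 2 ^ E (3 * enc (pre σ 0)) := by positivity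
    _ ≤ _ := Summable.le_tsum hs 0 (fun j _ => by positivity)

lemma val_Vdig_pos (n : ℕ) : 0 < val (Vdig n) := by
  rw [val_Vdig]
  have hs := summable_g (g := fun m => 3 * Nat.pair n m + 1) (fun m => by have := hgV n m; (try simp only []); omega)
  calc (0:ℝ) < 1 / 2 ^ E (3 * Nat.pair n 0 + 1) := by positivity
    _ ≤ _ := Summable.le_tsum hs 0 (fun j _ => by positivity)

/-! ### linearity of `val` -/

lemma val_finsum {α : Type} (t : Finset α) (c : α → ℤ) (D : α → ℕ → ℤ)
    (hD : ∀ a ∈ t, Summable (fun p => (D a p : ℝ) / 2 ^ E p)) :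
    val (fun p => ∑ a ∈ t, c a * D a p) = ∑ a ∈ t, (c a : ℝ) * val (D a) := by
  unfold val
  have hcast : ∀ p : ℕ, ((∑ a ∈ t, c a * D a p : ℤ) : ℝ) / 2 ^ E p
      = ∑ a ∈ t, (c a : ℝ) * ((D a p : ℝ) / 2 ^ E p) := by
    intro p
    push_cast
    rw [Finset.sum_div]
    apply Finset.sum_congr rfl
    intro a _
    ring
  rw [tsum_congr hcast]
  rw [Summable.tsum_finsetSum (fun a ha => ((hD a ha).mul_left _))]
  apply Finset.sum_congr rfl
  intro a ha
  rw [tsum_mul_left]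

lemma val_sub (d1 d2 : ℕ → ℤ) (h1 : Summable (fun p => (d1 p : ℝ) / 2 ^ E p))
    (h2 : Summable (fun p => (d2 p : ℝ) / 2 ^ E p)) :
    val (fun p => d1 p - d2 p) = val d1 - val d2 := by
  unfold val
  have hcast : ∀ p : ℕ, ((d1 p - d2 p : ℤ) : ℝ) / 2 ^ E p
      = (d1 p : ℝ) / 2 ^ E p - (d2 p : ℝ) / 2 ^ E p := by
    intro p; push_cast; ring
  rw [tsum_congr hcast, Summable.tsum_sub h1 h2]

/-! ### uniqueness of digits -/

lemma val_inj {d d' : ℕ → ℤ} (h : Bdd d 3) (h' : Bdd d' 3) (heq : val d = val d') :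
    ∀ p, d p = d' p := by
  intro p
  have hbdd : Bdd (fun p => d p - d' p) 6 := by
    intro q
    calc |d q - d' q| ≤ |d q| + |d' q| := abs_sub _ _
      _ ≤ 3 + 3 := add_le_add (h q) (h' q)
      _ = (6:ℤ) := by norm_num
  have h0 : val (fun p => d p - d' p) = 0 := by
    rw [val_sub d d' (summable_bdd h) (summable_bdd h'), heq, sub_self]
  have := key hbdd h0 (P := 0) (by norm_num) p (Nat.zero_le p)
  omega

/-! ### evaluation lemmas -/

lemma Wdig_self (σ : ℕ → Bool) (L : ℕ) : Wdig σ (3 * enc (pre σ L)) = 1 := by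
  unfold Wdig; rw [if_pos ⟨L, rfl⟩]

lemma Wdig_ne {σ σ' : ℕ → Bool} {L : ℕ} (i : ℕ) (hiL : i < L) (hne : σ i ≠ σ' i) :
    Wdig σ' (3 * enc (pre σ L)) = 0 := by
  unfold Wdig
  rw [if_neg]
  rintro ⟨n, hn⟩
  have h2 : enc (pre σ' n) = enc (pre σ L) := by omega
  have h3 := enc_injective h2
  have h4 : n = L := by rw [← pre_length σ' n, h3, pre_length]
  subst h4
  exact hne ((pre_eq h3.symm hiL))

lemma Vdig_self (n m : ℕ) : Vdig n (3 * Nat.pair n m + 1) = 1 := by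
  unfold Vdig; rw [if_pos ⟨m, rfl⟩]

lemma Vdig_ne {n n' : ℕ} (m : ℕ) (hne : n' ≠ n) : Vdig n' (3 * Nat.pair n m + 1) = 0 := by
  unfold Vdig
  rw [if_neg]
  rintro ⟨m', hm'⟩
  have : Nat.pair n' m' = Nat.pair n m := by omega
  exact hne (Nat.pair_eq_pair.mp this).1

/-! ### distinctness of the three families -/

lemma W_ne_V (σ : ℕ → Bool) (n : ℕ) : val (Wdig σ) ≠ val (Vdig n) := by
  intro heq
  have := val_inj (Wdig_bdd σ) (Vdig_bdd n) heq (3 * enc (pre σ 0))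
  rw [Wdig_self σ 0, Vdig_mod (by omega)] at this
  exact one_ne_zero this

lemma F_ne_W (τ : ℕ → Fin 4) (σ : ℕ → Bool) : val (Fdig τ) ≠ val (Wdig σ) := by
  intro heq
  have := val_inj (Fdig_bdd τ) (Wdig_bdd σ) heq (3 * enc (pre σ 0))
  rw [Wdig_self σ 0, Fdig_mod (by omega)] at this
  exact one_ne_zero this.symm

lemma F_ne_V (τ : ℕ → Fin 4) (n : ℕ) : val (Fdig τ) ≠ val (Vdig n) := by
  intro heq
  have := val_inj (Fdig_bdd τ) (Vdig_bdd n) heq (3 * Nat.pair n 0 + 1)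
  rw [Vdig_self n 0, Fdig_mod (by omega)] at this
  exact one_ne_zero this.symm

/-! ### choice of digit representations -/

open scoped Classical in
noncomputable def Sig (y : ℝ) : ℕ → Bool :=
  if h : ∃ σ, y = val (Wdig σ) then h.choose else fun _ => false
open scoped Classical in
noncomputable def Nn (y : ℝ) : ℕ :=
  if h : ∃ n, y = val (Vdig n) then h.choose else 0
open scoped Classical in
noncomputable def Tau (y : ℝ) : ℕ → Fin 4 :=
  if h : ∃ τ, y = val (Fdig τ) then h.choose else fun _ => 0
open scoped Classical in
noncomputable def D (y : ℝ) : ℕ → ℤ :=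
  if ∃ σ, y = val (Wdig σ) then Wdig (Sig y)
  else if ∃ n, y = val (Vdig n) then Vdig (Nn y)
  else if ∃ τ, y = val (Fdig τ) then Fdig (Tau y)
  else 0

lemma Sig_spec {y : ℝ} (h : ∃ σ, y = val (Wdig σ)) : y = val (Wdig (Sig y)) := by
  rw [Sig, dif_pos h]; exact h.choose_spec
lemma Nn_spec {y : ℝ} (h : ∃ n, y = val (Vdig n)) : y = val (Vdig (Nn y)) := by
  rw [Nn, dif_pos h]; exact h.choose_spec
lemma Tau_spec {y : ℝ} (h : ∃ τ, y = val (Fdig τ)) : y = val (Fdig (Tau y)) := by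
  rw [Tau, dif_pos h]; exact h.choose_spec

lemma D_W {y : ℝ} (h : ∃ σ, y = val (Wdig σ)) : D y = Wdig (Sig y) := by
  rw [D, if_pos h]
lemma D_V {y : ℝ} (hW : ¬ ∃ σ, y = val (Wdig σ)) (h : ∃ n, y = val (Vdig n)) :
    D y = Vdig (Nn y) := by
  rw [D, if_neg hW, if_pos h]
lemma D_F {y : ℝ} (hW : ¬ ∃ σ, y = val (Wdig σ)) (hV : ¬ ∃ n, y = val (Vdig n))
    (h : ∃ τ, y = val (Fdig τ)) : D y = Fdig (Tau y) := by
  rw [D, if_neg hW, if_neg hV, if_pos h]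

lemma D_bdd (y : ℝ) : Bdd (D y) 3 := by
  by_cases hW : ∃ σ, y = val (Wdig σ)
  · rw [D_W hW]; exact Wdig_bdd _
  by_cases hV : ∃ n, y = val (Vdig n)
  · rw [D_V hW hV]; exact Vdig_bdd _
  by_cases hF : ∃ τ, y = val (Fdig τ)
  · rw [D_F hW hV hF]; exact Fdig_bdd _
  · rw [D, if_neg hW, if_neg hV, if_neg hF]; intro p; simp

lemma D_val {y : ℝ}
    (h : (∃ σ, y = val (Wdig σ)) ∨ (∃ n, y = val (Vdig n)) ∨ (∃ τ, y = val (Fdig τ))) :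
    val (D y) = y := by
  by_cases hW : ∃ σ, y = val (Wdig σ)
  · rw [D_W hW, ← Sig_spec hW]
  by_cases hV : ∃ n, y = val (Vdig n)
  · rw [D_V hW hV, ← Nn_spec hV]
  have hF : ∃ τ, y = val (Fdig τ) := by tauto
  rw [D_F hW hV hF, ← Tau_spec hF]

/-- `D y` vanishes on class-0 positions unless `y` is of `W` type. -/
lemma D_mod0 {y : ℝ} (hW : ¬ ∃ σ, y = val (Wdig σ)) {p : ℕ} (hp : p % 3 = 0) :
    D y p = 0 := by
  by_cases hV : ∃ n, y = val (Vdig n)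
  · rw [D_V hW hV]; exact Vdig_mod (by omega)
  by_cases hF : ∃ τ, y = val (Fdig τ)
  · rw [D_F hW hV hF]; exact Fdig_mod (by omega)
  · rw [D, if_neg hW, if_neg hV, if_neg hF]; rfl

/-- `D y` vanishes on class-1 positions unless `y` is of `V` type. -/
lemma D_mod1 {y : ℝ} (hV : ¬ ∃ n, y = val (Vdig n)) {p : ℕ} (hp : p % 3 = 1) :
    D y p = 0 := by
  by_cases hW : ∃ σ, y = val (Wdig σ)
  · rw [D_W hW]; exact Wdig_mod (by omega)
  by_cases hF : ∃ τ, y = val (Fdig τ)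
  · rw [D_F hW hV hF]; exact Fdig_mod (by omega)
  · rw [D, if_neg hW, if_neg hV, if_neg hF]; rfl

lemma three_mul_lt (M : ℕ) : 3 * M < 2 ^ (4 * M + 6) := by
  have h1 : M < 2 ^ M := M.lt_two_pow_self
  have h2 : 1 ≤ 2 ^ M := Nat.one_le_two_pow
  have h3 : 2 ^ (M + 2) ≤ 2 ^ (4 * M + 6) := Nat.pow_le_pow_right (by norm_num) (by omega)
  have h4 : 2 ^ (M + 2) = 4 * 2 ^ M := by rw [pow_add]; ring
  omega

/-! ### the combined independence lemma -/

lemma combined (t : Finset ℝ) (c : ℝ → ℤ)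
    (hmem : ∀ y ∈ t,
      (∃ σ, y = val (Wdig σ)) ∨ (∃ n, y = val (Vdig n)) ∨ (∃ τ, y = val (Fdig τ)))
    (hrel : ∑ y ∈ t, (c y : ℝ) * y = 0) :
    ∀ y ∈ t, ((∃ σ, y = val (Wdig σ)) ∨ (∃ n, y = val (Vdig n))) → c y = 0 := by
  classical
  intro y0 hy0t hy0S
  by_contra hc0
  set M : ℕ := 3 * ∑ y ∈ t, (c y).natAbs with hM
  set dd : ℕ → ℤ := fun p => ∑ y ∈ t, c y * D y p with hdd
  have hddbdd : Bdd dd M := by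
    intro p
    calc |dd p| ≤ ∑ y ∈ t, |c y * D y p| := Finset.abs_sum_le_sum_abs _ _
      _ ≤ ∑ y ∈ t, |c y| * 3 := by
          apply Finset.sum_le_sum
          intro y _
          rw [abs_mul]
          exact mul_le_mul_of_nonneg_left (D_bdd y p) (abs_nonneg _)
      _ = (M : ℤ) := by
          rw [hM]
          push_cast
          rw [Finset.mul_sum]
          apply Finset.sum_congr rfl
          intro y _
          rw [Int.abs_eq_natAbs]
          ring
  have hval0 : val dd = 0 := by
    rw [hdd, val_finsum t c D (fun y hy => summable_bdd (D_bdd y))]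
    rw [← hrel]
    apply Finset.sum_congr rfl
    intro y hy
    rw [D_val (hmem y hy)]
  have hkey : ∀ p, M ≤ p → dd p = 0 := key hddbdd hval0 (three_mul_lt M)
  -- now find a large position where `dd` is `c y0`
  by_cases hW0 : ∃ σ, y0 = val (Wdig σ)
  · -- W-type point
    set σ0 : ℕ → Bool := Sig y0 with hσ0
    have hy0 : y0 = val (Wdig σ0) := Sig_spec hW0
    -- first differences
    set δ : ℝ → ℕ := fun y =>
      if h : ∃ i, Sig y i ≠ σ0 i then Nat.find h else 0 with hδ
    set L : ℕ := M + (t.sup δ) + 1 with hL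
    set p0 : ℕ := 3 * enc (pre σ0 L) with hp0
    have hp0M : M ≤ p0 := by
      have h1 : L + 1 ≤ enc (pre σ0 L) := by
        have := length_lt_enc (pre σ0 L); rwa [pre_length] at this
      omega
    have hzero : ∀ y ∈ t, y ≠ y0 → c y * D y p0 = 0 := by
      intro y hy hne
      by_cases hWy : ∃ σ, y = val (Wdig σ)
      · rw [D_W hWy]
        have hsigne : Sig y ≠ σ0 := by
          intro heq
          apply hne
          rw [Sig_spec hWy, heq, ← hy0]
        have hex : ∃ i, Sig y i ≠ σ0 i := Function.ne_iff.mp hsigne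
        have hfind : Sig y (δ y) ≠ σ0 (δ y) := by
          rw [hδ]; simp only [dif_pos hex]; exact Nat.find_spec hex
        have hlt : δ y < L := by
          have := Finset.le_sup (f := δ) hy
          omega
        rw [Wdig_ne (δ y) hlt (fun hh => hfind hh.symm), mul_zero]
      · rw [D_mod0 hWy (by omega), mul_zero]
    have hval : dd p0 = c y0 := by
      show ∑ y ∈ t, c y * D y p0 = c y0
      rw [Finset.sum_eq_single_of_mem y0 hy0t (fun y hy hne => hzero y hy hne)]
      rw [D_W hW0, ← hσ0, Wdig_self σ0 L, mul_one]
    exact hc0 (by rw [← hval, hkey p0 hp0M])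
  · -- V-type point
    have hV0 : ∃ n, y0 = val (Vdig n) := by tauto
    set n0 : ℕ := Nn y0 with hn0
    have hy0 : y0 = val (Vdig n0) := Nn_spec hV0
    set p0 : ℕ := 3 * Nat.pair n0 M + 1 with hp0
    have hp0M : M ≤ p0 := by
      have := Nat.right_le_pair n0 M
      omega
    have hzero : ∀ y ∈ t, y ≠ y0 → c y * D y p0 = 0 := by
      intro y hy hne
      by_cases hVy : ∃ n, y = val (Vdig n)
      · by_cases hWy : ∃ σ, y = val (Wdig σ)
        · rw [D_W hWy, Wdig_mod (by omega), mul_zero]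
        · rw [D_V hWy hVy]
          have hnne : Nn y ≠ n0 := by
            intro heq
            apply hne
            rw [Nn_spec hVy, heq, ← hy0]
          rw [Vdig_ne M hnne, mul_zero]
      · rw [D_mod1 hVy (by omega), mul_zero]
    have hval : dd p0 = c y0 := by
      show ∑ y ∈ t, c y * D y p0 = c y0
      rw [Finset.sum_eq_single_of_mem y0 hy0t (fun y hy hne => hzero y hy hne)]
      rw [D_V hW0 hV0, ← hn0, Vdig_self n0 M, mul_one]
    exact hc0 (by rw [← hval, hkey p0 hp0M])

/-! ### the actual sets -/

noncomputable def wfun (σ : ℕ → Bool) : ℝ := val (Wdig σ)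
noncomputable def vfun (n : ℕ) : ℝ := val (Vdig n)
def kfun (i : ℕ) : ℕ := (3 * i + 4)^2

lemma four_pow_kfun (i : ℕ) : (4:ℝ) ^ kfun i = 2 ^ E (3 * i + 2) := by
  have h4 : (4:ℝ) = 2^2 := by norm_num
  have h2 : 2 * kfun i = E (3*i+2) := by unfold kfun E; try ring
  rw [h4, ← pow_mul, h2]

lemma Fsum_eq (σ : ℕ → Fin 4) :
    ∑' i, ((σ i : ℕ) : ℝ) / 4 ^ kfun i = val (Fdig σ) := by
  rw [val_Fdig]
  apply tsum_congr
  intro i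
  rw [four_pow_kfun]

/-! ### continuity, injectivity, perfectness -/

lemma wfun_continuous : Continuous wfun := by
  have heq : wfun = fun σ => ∑' n, (1:ℝ) / 2 ^ E (3 * enc (pre σ n)) :=
    funext val_Wdig
  rw [heq]
  apply continuous_tsum (u := fun n : ℕ => ((1:ℝ)/2)^n)
  · intro n
    have hcomp : (fun σ : ℕ → Bool => (1:ℝ)/2^E (3 * enc (pre σ n)))
        = (fun l : Fin n → Bool => (1:ℝ)/2^E (3 * enc (List.ofFn l)))
          ∘ (fun σ (i : Fin n) => σ i) := rfl
    rw [hcomp]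
    exact Continuous.comp continuous_of_discreteTopology
      (continuous_pi fun i => continuous_apply (i : ℕ))
  · exact summable_geometric_two
  · intro n σ
    rw [Real.norm_eq_abs, abs_of_pos (by positivity), div_pow, one_pow]
    apply div_le_div_of_nonneg_left one_pos.le (by positivity)
    apply pow_le_pow_right₀ one_le_two
    have := hgW σ n; omega

lemma wfun_injective : Function.Injective wfun := by
  intro σ σ' h
  by_contra hne
  obtain ⟨i, hi⟩ := Function.ne_iff.mp hne
  have hval := val_inj (Wdig_bdd σ) (Wdig_bdd σ') h (3 * enc (pre σ (i+1)))
  rw [Wdig_self σ (i+1), Wdig_ne i (Nat.lt_succ_self i) hi] at hval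
  exact one_ne_zero hval

lemma perfect_W : Perfect (Set.range wfun) := by
  constructor
  · exact (isCompact_range wfun_continuous).isClosed
  · intro x hx
    rw [accPt_iff_nhds]
    intro U hU
    obtain ⟨σ, rfl⟩ := hx
    set τ : ℕ → (ℕ → Bool) := fun k => Function.update σ k (!σ k) with hτ
    have htend : Filter.Tendsto (fun k => wfun (τ k)) Filter.atTop (nhds (wfun σ)) := by
      apply (wfun_continuous.tendsto σ).comp
      rw [tendsto_pi_nhds]
      intro i
      apply Filter.Tendsto.congr' (f₁ := fun _ => σ i)
      · filter_upwards [Filter.eventually_gt_atTop i] with k hk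
        rw [hτ]
        exact (Function.update_of_ne (by omega) _ σ).symm
      · exact tendsto_const_nhds
    have hev : ∀ᶠ k in Filter.atTop, wfun (τ k) ∈ U := htend hU
    obtain ⟨k, hk⟩ := hev.exists
    refine ⟨wfun (τ k), ⟨hk, Set.mem_range_self _⟩, ?_⟩
    intro heq
    have hτσ : τ k = σ := wfun_injective heq
    have : τ k k = σ k := by rw [hτσ]
    rw [hτ] at this
    simp at this

/-! ### rational coefficients to integer coefficients -/

lemma int_coeffs (t : Finset ℝ) (q : ℝ → ℚ) :
    ∃ (N : ℕ) (c : ℝ → ℤ), 0 < N ∧ (∀ y ∈ t, (c y : ℚ) = q y * N) := by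
  classical
  set N := ∏ y ∈ t, (q y).den with hN
  refine ⟨N, fun y => (q y).num * ((N / (q y).den : ℕ) : ℤ),
    Finset.prod_pos (fun y _ => (q y).pos), ?_⟩
  intro y hy
  have hdvd : (q y).den ∣ N := hN ▸ Finset.dvd_prod_of_mem _ hy
  obtain ⟨k, hk⟩ := hdvd
  have h1 : N / (q y).den = k := by rw [hk]; exact Nat.mul_div_cancel_left k (q y).pos
  have h2 : (((q y).num * ((N / (q y).den : ℕ) : ℤ) : ℤ) : ℚ) = q y * N := by
    rw [h1, hk]; push_cast; rw [← mul_assoc, Rat.mul_den_eq_num]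
  exact h2

lemma mem_WV_rep {y : ℝ} (h : y ∈ Set.range wfun ∪ Set.range vfun) :
    (∃ σ, y = val (Wdig σ)) ∨ (∃ n, y = val (Vdig n)) := by
  rcases h with ⟨σ, rfl⟩ | ⟨n, rfl⟩
  · exact Or.inl ⟨σ, rfl⟩
  · exact Or.inr ⟨n, rfl⟩

lemma lin_indep :
    LinearIndependent ℚ ((↑) : (Set.range wfun ∪ Set.range vfun : Set ℝ) → ℝ) := by
  rw [linearIndependent_subtype_iff, linearIndepOn_iff]
  intro l hl hl0
  rw [Finsupp.mem_supported] at hl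
  rw [Finsupp.linearCombination_apply, Finsupp.sum] at hl0
  obtain ⟨N, c, hN, hc⟩ := int_coeffs l.support l
  have hrel : ∑ y ∈ l.support, (c y : ℝ) * y = 0 := by
    have hterm : ∀ y ∈ l.support, (c y : ℝ) * y = (N:ℝ) * ((l y : ℝ) * y) := by
      intro y hy
      have h1 : ((c y : ℚ) : ℝ) = ((l y * N : ℚ) : ℝ) := by rw [hc y hy]
      push_cast at h1
      rw [h1]; ring
    rw [Finset.sum_congr rfl hterm, ← Finset.mul_sum]
    have h2 : ∑ y ∈ l.support, (l y : ℝ) * y = 0 := by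
      rw [← hl0]
      apply Finset.sum_congr rfl
      intro y hy
      rw [Rat.smul_def]
      rfl
    rw [h2, mul_zero]
  have hz := combined l.support c (fun y hy => by
      rcases mem_WV_rep (hl hy) with h | h
      · exact Or.inl h
      · exact Or.inr (Or.inl h)) hrel
  ext y
  by_cases hy : y ∈ l.support
  · have hcy := hz y hy (mem_WV_rep (hl hy))
    have heq := hc y hy
    rw [hcy] at heq
    have hNne : ((N:ℚ)) ≠ 0 := Nat.cast_ne_zero.mpr hN.ne'
    have : l y * N = 0 := by exact_mod_cast heq.symm
    rcases mul_eq_zero.mp this with h | h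
    · simpa using h
    · exact absurd h hNne
  · simpa using Finsupp.notMem_support_iff.mp hy

end Stmt12

open Stmt12 in
theorem stmt_12 :
    ∃ (k : ℕ → ℕ) (W : Set ℝ) (v : ℕ → ℝ),
      (∀ i, 0 < k i) ∧
      Perfect W ∧ W.Nonempty ∧ W ⊆ Set.Icc (0 : ℝ) 1 ∧
      (∀ n, v n ∈ Set.Icc (0 : ℝ) 1) ∧
      Filter.Tendsto v Filter.atTop (nhds 0) ∧
      LinearIndependent ℚ ((↑) : (W ∪ Set.range v : Set ℝ) → ℝ) ∧
      Submodule.span ℚ {x : ℝ | ∃ σ : ℕ → Fin 4, x = ∑' i, (σ i : ℝ) / 4 ^ k i} ⊓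
        Submodule.span ℚ (W ∪ Set.range v) = ⊥ := by
  classical
  refine ⟨kfun, Set.range wfun, vfun, ?_, perfect_W, ⟨wfun (fun _ => false), Set.mem_range_self _⟩,
    ?_, ?_, ?_, ?_, ?_⟩
  · intro i
    have : 0 < 3 * i + 4 := by omega
    exact pow_pos this 2
  · rintro x ⟨σ, rfl⟩
    exact val_Wdig_mem σ
  · intro n
    exact val_Vdig_mem n
  · apply squeeze_zero (fun n => (val_Vdig_pos n).le) val_Vdig_le
    have h2 : Filter.Tendsto (fun n : ℕ => ((1:ℝ)/2)^n) Filter.atTop (nhds 0) := by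
      apply tendsto_pow_atTop_nhds_zero_of_lt_one (by norm_num) (by norm_num)
    have := h2.const_mul (2:ℝ)
    simpa using this
  · exact lin_indep
  · -- span intersection
    have hconv : ∀ σ : ℕ → Fin 4, (∑' i, (σ i : ℝ) / 4 ^ kfun i) = val (Fdig σ) := by
      intro σ
      rw [← Fsum_eq]
    rw [eq_bot_iff]
    intro x hx
    rw [Submodule.mem_inf] at hx
    obtain ⟨hxF, hxS⟩ := hx
    rw [Submodule.mem_span_set] at hxF hxS
    obtain ⟨cF, hcFs, hcFsum⟩ := hxF
    obtain ⟨cS, hcSs, hcSsum⟩ := hxS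
    set t : Finset ℝ := cF.support ∪ cS.support with ht
    have hsub : ∀ (cc : ℝ →₀ ℚ), ↑cc.support ⊆ (t : Set ℝ) →
        (cc.sum fun mi r => r • mi) = ∑ y ∈ t, (cc y : ℝ) * y := by
      intro cc hcc
      rw [Finsupp.sum]
      rw [Finset.sum_subset (Finset.coe_subset.mp hcc)]
      · apply Finset.sum_congr rfl
        intro y _
        rw [Rat.smul_def]
      · intro y _ hy
        rw [Finsupp.notMem_support_iff.mp hy]
        simp
    have hsumF : ∑ y ∈ t, (cF y : ℝ) * y = x := by
      rw [← hsub cF (by rw [ht]; simp [Finset.coe_subset])]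
      exact hcFsum
    have hsumS : ∑ y ∈ t, (cS y : ℝ) * y = x := by
      rw [← hsub cS (by rw [ht]; simp [Finset.coe_subset])]
      exact hcSsum
    obtain ⟨N, c, hN, hc⟩ := int_coeffs t (fun y => cF y - cS y)
    have hrel : ∑ y ∈ t, (c y : ℝ) * y = 0 := by
      have hterm : ∀ y ∈ t, (c y : ℝ) * y
          = (N:ℝ) * (((cF y : ℝ) * y) - ((cS y : ℝ) * y)) := by
        intro y hy
        have h1 : ((c y : ℚ) : ℝ) = (((cF y - cS y) * N : ℚ) : ℝ) := by rw [hc y hy]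
        push_cast at h1
        rw [h1]; ring
      rw [Finset.sum_congr rfl hterm, ← Finset.mul_sum, Finset.sum_sub_distrib,
        hsumF, hsumS, sub_self, mul_zero]
    have hmem : ∀ y ∈ t,
        (∃ σ, y = val (Wdig σ)) ∨ (∃ n, y = val (Vdig n)) ∨ (∃ τ, y = val (Fdig τ)) := by
      intro y hy
      rcases Finset.mem_union.mp hy with hyF | hyS
      · obtain ⟨τ, hτ⟩ := hcFs hyF
        exact Or.inr (Or.inr ⟨τ, by rw [hτ, hconv]⟩)
      · rcases mem_WV_rep (hcSs hyS) with h | h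
        · exact Or.inl h
        · exact Or.inr (Or.inl h)
    have hz := combined t c hmem hrel
    have hS0 : ∀ y, cS y = 0 := by
      intro y
      by_contra hne
      have hy : y ∈ cS.support := Finsupp.mem_support_iff.mpr hne
      have hyt : y ∈ t := Finset.mem_union_right _ hy
      have hrep := mem_WV_rep (hcSs hy)
      have hcy := hz y hyt hrep
      have h1 := hc y hyt
      rw [hcy] at h1
      have hNne : (N:ℚ) ≠ 0 := Nat.cast_ne_zero.mpr hN.ne'
      have h2 : (cF y - cS y) * N = 0 := by exact_mod_cast h1.symm
      have hq0 : cF y - cS y = 0 := by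
        rcases mul_eq_zero.mp h2 with h | h
        · exact h
        · exact absurd h hNne
      have hcF : cF y = cS y := sub_eq_zero.mp hq0
      have hyF : y ∈ cF.support := Finsupp.mem_support_iff.mpr (by rw [hcF]; exact hne)
      obtain ⟨τ, hτ⟩ := hcFs hyF
      have hτ' : y = val (Fdig τ) := by rw [hτ, hconv]
      rcases hrep with ⟨σ, hσ⟩ | ⟨n, hn⟩
      · exact F_ne_W τ σ (by rw [← hτ', ← hσ])
      · exact F_ne_V τ n (by rw [← hτ', ← hn])
    rw [Submodule.mem_bot]
    rw [← hsumS]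
    apply Finset.sum_eq_zero
    intro y _
    rw [hS0 y]
    simp
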